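/- For r ∈ (0,1), the integral of x^2 · f_K(x;r) over ℝ equals 1 - sqrt(1-r^2). -/

import Mathlib

open Real MeasureTheory

set_option maxHeartbeats 1000000

/-- The Konno density function `f_K(x;r)`. -/
noncomputable def konnoDensity (r x : ℝ) : ℝ :=
  if x ∈ Set.Ioo (-r) r then Real.sqrt (1 - r ^ 2) / (π * (1 - x ^ 2) * Real.sqrt (r ^ 2 - x ^ 2))
  else 0

noncomputable def konnoAnti (r x : ℝ) : ℝ :=
  Real.arcsin (x * Real.sqrt (1 - r ^ 2) / (r * Real.sqrt (1 - x ^ 2))) / Real.sqrt (1 - r ^ 2)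
    - Real.arcsin (x / r)

lemma konnoAnti_hasDerivAt (r : ℝ) (hr0 : 0 < r) (hr1 : r < 1) {x : ℝ}
    (hx : x ∈ Set.Ioo (-r) r) :
    HasDerivAt (konnoAnti r) (x ^ 2 / ((1 - x ^ 2) * Real.sqrt (r ^ 2 - x ^ 2))) x := by
  obtain ⟨hx1, hx2⟩ := hx
  have hxr : x ^ 2 < r ^ 2 := sq_lt_sq' hx1 hx2
  have hr2 : r ^ 2 < 1 := by nlinarith
  have hw0 : (0:ℝ) < 1 - x ^ 2 := by nlinarith
  have hq0 : (0:ℝ) < r ^ 2 - x ^ 2 := by nlinarith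
  have hs0 : (0:ℝ) < 1 - r ^ 2 := by nlinarith
  set s := Real.sqrt (1 - r ^ 2) with hs_def
  set w := Real.sqrt (1 - x ^ 2) with hw_def
  set q := Real.sqrt (r ^ 2 - x ^ 2) with hq_def
  have hs : 0 < s := Real.sqrt_pos.2 hs0
  have hw : 0 < w := Real.sqrt_pos.2 hw0
  have hq : 0 < q := Real.sqrt_pos.2 hq0
  have hs2 : s ^ 2 = 1 - r ^ 2 := Real.sq_sqrt hs0.le
  have hw2 : w ^ 2 = 1 - x ^ 2 := Real.sq_sqrt hw0.le
  have hq2 : q ^ 2 = r ^ 2 - x ^ 2 := Real.sq_sqrt hq0.le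
  -- derivative of 1 - y^2
  have h1 : HasDerivAt (fun y : ℝ => 1 - y ^ 2) (-(2 * x)) x := by
    simpa using (hasDerivAt_pow 2 x).const_sub 1
  have hW : HasDerivAt (fun y : ℝ => Real.sqrt (1 - y ^ 2)) (1 / (2 * w) * -(2 * x)) x :=
    (Real.hasDerivAt_sqrt hw0.ne').comp x h1
  -- derivative of v = x*s/(r*w)
  have hnum : HasDerivAt (fun y : ℝ => y * s) s x := by
    simpa using (hasDerivAt_id x).mul_const s
  have hden : HasDerivAt (fun y : ℝ => r * Real.sqrt (1 - y ^ 2)) (r * (1 / (2 * w) * -(2 * x))) x :=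
    hW.const_mul r
  have hrw : r * w ≠ 0 := by positivity
  have hv : HasDerivAt (fun y : ℝ => y * s / (r * Real.sqrt (1 - y ^ 2)))
      ((s * (r * w) - x * s * (r * (1 / (2 * w) * -(2 * x)))) / (r * w) ^ 2) x :=
    hnum.div hden hrw
  -- the inner value
  set v := x * s / (r * w) with hv_def
  have hv2 : v ^ 2 < 1 := by
    rw [hv_def, div_pow, div_lt_one (by positivity)]
    nlinarith [hs2, hw2]
  have hvne1 : v ≠ 1 := by intro h; rw [h] at hv2; norm_num at hv2
  have hvnem1 : v ≠ -1 := by intro h; rw [h] at hv2; norm_num at hv2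
  have E1 : Real.sqrt (1 - v ^ 2) = q / (r * w) := by
    rw [show 1 - v ^ 2 = (q / (r * w)) ^ 2 by
      rw [hv_def]; field_simp; nlinarith [hs2, hw2, hq2]]
    exact Real.sqrt_sq (by positivity)
  have harc : HasDerivAt (fun y : ℝ => Real.arcsin (y * s / (r * Real.sqrt (1 - y ^ 2))))
      (1 / Real.sqrt (1 - v ^ 2) *
        ((s * (r * w) - x * s * (r * (1 / (2 * w) * -(2 * x)))) / (r * w) ^ 2)) x :=
    (Real.hasDerivAt_arcsin hvnem1 hvne1).comp (h₂ := Real.arcsin) x hv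
  -- second term
  have hxo : (x / r) ^ 2 < 1 := by
    rw [div_pow, div_lt_one (by positivity)]; exact hxr
  have hxne1 : x / r ≠ 1 := by intro h; rw [h] at hxo; norm_num at hxo
  have hxnem1 : x / r ≠ -1 := by intro h; rw [h] at hxo; norm_num at hxo
  have E2 : Real.sqrt (1 - (x / r) ^ 2) = q / r := by
    rw [show 1 - (x / r) ^ 2 = (q / r) ^ 2 by field_simp; nlinarith [hq2]]
    exact Real.sqrt_sq (by positivity)
  have hB : HasDerivAt (fun y : ℝ => Real.arcsin (y / r))
      (1 / Real.sqrt (1 - (x / r) ^ 2) * (1 / r)) x := by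
    have := (Real.hasDerivAt_arcsin hxnem1 hxne1).comp (h₂ := Real.arcsin) x ((hasDerivAt_id x).div_const r)
    simpa [Function.comp_def] using this
  have hA := (harc.div_const s).sub hB
  refine hA.congr_deriv ?_
  rw [E1, E2]
  field_simp
  linear_combination (-x^2) * hw2

lemma konnoAnti_continuousOn (r : ℝ) (hr0 : 0 < r) (hr1 : r < 1) :
    ContinuousOn (konnoAnti r) (Set.Icc (-r) r) := by
  apply ContinuousOn.sub
  · apply ContinuousOn.div_const
    apply Real.continuous_arcsin.comp_continuousOn
    apply ContinuousOn.div (by fun_prop) (by fun_prop)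
    intro x hx
    have hx2 : x ^ 2 ≤ r ^ 2 := sq_le_sq' hx.1 hx.2
    have h0 : (0:ℝ) < 1 - x ^ 2 := by nlinarith
    have h1 : 0 < Real.sqrt (1 - x ^ 2) := Real.sqrt_pos.2 h0
    exact (mul_pos hr0 h1).ne'
  · exact Real.continuous_arcsin.comp_continuousOn (by fun_prop)

theorem konnoDensity_second_moment (r : ℝ) (hr0 : 0 < r) (hr1 : r < 1) :
    ∫ x : ℝ, x ^ 2 * konnoDensity r x = 1 - Real.sqrt (1 - r ^ 2) := by
  have hs0 : (0:ℝ) < 1 - r ^ 2 := by nlinarith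
  set s := Real.sqrt (1 - r ^ 2) with hs_def
  have hs : 0 < s := Real.sqrt_pos.2 hs0
  have hrr : -r < r := by linarith
  set g : ℝ → ℝ := fun x => s / π * (x ^ 2 / ((1 - x ^ 2) * Real.sqrt (r ^ 2 - x ^ 2))) with hg_def
  set G : ℝ → ℝ := fun x => s / π * konnoAnti r x with hG_def
  have hderiv : ∀ x ∈ Set.Ioo (-r) r, HasDerivAt G (g x) x := fun x hx =>
    (konnoAnti_hasDerivAt r hr0 hr1 hx).const_mul (s / π)
  have hcont : ContinuousOn G (Set.Icc (-r) r) :=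
    continuousOn_const.mul (konnoAnti_continuousOn r hr0 hr1)
  have hpos : ∀ x ∈ Set.Ioo (-r) r, 0 ≤ g x := by
    intro x hx
    have hx2 : x ^ 2 < r ^ 2 := sq_lt_sq' hx.1 hx.2
    have h0 : (0:ℝ) < 1 - x ^ 2 := by nlinarith
    exact mul_nonneg (by positivity)
      (div_nonneg (sq_nonneg x) (mul_nonneg h0.le (Real.sqrt_nonneg _)))
  have hint : IntervalIntegrable g volume (-r) r := by
    apply intervalIntegral.intervalIntegrable_deriv_of_nonneg
    · rwa [Set.uIcc_of_le hrr.le]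
    · rwa [min_eq_left hrr.le, max_eq_right hrr.le]
    · rwa [min_eq_left hrr.le, max_eq_right hrr.le]
  have hind : (fun x => x ^ 2 * konnoDensity r x) = Set.indicator (Set.Ioo (-r) r) g := by
    funext x
    by_cases hx : x ∈ Set.Ioo (-r) r
    · rw [Set.indicator_of_mem hx, hg_def, konnoDensity, if_pos hx]
      simp only [div_eq_mul_inv, mul_inv]
      ring
    · rw [Set.indicator_of_notMem hx, konnoDensity, if_neg hx, mul_zero]
  rw [hind, MeasureTheory.integral_indicator measurableSet_Ioo,
    ← MeasureTheory.integral_Ioc_eq_integral_Ioo,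
    ← intervalIntegral.integral_of_le hrr.le,
    intervalIntegral.integral_eq_sub_of_hasDerivAt_of_le hrr.le hcont hderiv hint]
  have hGr : konnoAnti r r = π / (2 * s) - π / 2 := by
    rw [konnoAnti, ← hs_def, div_self hr0.ne', Real.arcsin_one,
      show r * s / (r * s) = 1 from div_self (by positivity)]
    rw [Real.arcsin_one]; ring
  have hGmr : konnoAnti r (-r) = -(π / (2 * s)) + π / 2 := by
    rw [konnoAnti, neg_div, div_self hr0.ne', Real.arcsin_neg, Real.arcsin_one,
      show -r * s / (r * Real.sqrt (1 - (-r) ^ 2)) = -1 by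
        rw [neg_sq, ← hs_def]; field_simp]
    rw [Real.arcsin_neg, Real.arcsin_one]; ring
  rw [hG_def]
  simp only [hGr, hGmr]
  field_simp
  ring
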